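/- Let M₁ = (E₁, 𝓑₁) and M₂ = (E₂, 𝓑₂) be matroids with E₁ ∩ E₂ = {p}, where p is not a coloop of both M₁ and M₂. Let E₁ ⊎ E₂ = (E₁ ∪ E₂ ∪ {p₁,p₂}) ∖ {p} be the disjoint union obtained by splitting p into two copies p₁, p₂, and let π : ℝ^{E₁⊎E₂} → ℝ^{E₁∪E₂} be the linear map sending the unit vectors of p₁ and p₂ both to the unit vector of p and fixing all other unit vectors. Then π restricts to a linear isomorphism from (P_{M₁} × P_{M₂}) ∩ {x ∈ ℝ^{E₁⊎E₂} : x_{p₁} + x_{p₂} ≤ 1} onto the base polytope P_{S(M₁,M₂)} of the series connection S(M₁,M₂). -/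

import Mathlib

open MvPolynomial Set Pointwise

noncomputable section

/-- `f` is an affine-linear polynomial (degree at most one). -/
def IsAffLin {ι : Type} (f : MvPolynomial ι ℝ) : Prop := f.totalDegree ≤ 1

/-- `f` is nonnegative on `V`. -/
def NonnegOn {ι : Type} (V : Set (ι → ℝ)) (f : MvPolynomial ι ℝ) : Prop :=
  ∀ v ∈ V, 0 ≤ eval v f

/-- `ℓ` is `k`-sos with respect to `V`: on `V` it agrees with a sum of squares of
polynomials of degree at most `k`. -/
def IsKSos {ι : Type} (V : Set (ι → ℝ)) (k : ℕ) (ℓ : MvPolynomial ι ℝ) : Prop :=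
  ∃ (s : ℕ) (h : Fin s → MvPolynomial ι ℝ),
    (∀ i, (h i).totalDegree ≤ k) ∧ ∀ v ∈ V, eval v ℓ = ∑ i, (eval v (h i)) ^ 2

/-- The Theta rank of a point configuration `V`. -/
def thetaRank {ι : Type} (V : Set (ι → ℝ)) : ℕ :=
  sInf {k | ∀ ℓ, IsAffLin ℓ → NonnegOn V ℓ → IsKSos V k ℓ}

/-- `F` is a face of `V`. -/
def IsFaceOf {ι : Type} (V F : Set (ι → ℝ)) : Prop :=
  ∃ g, IsAffLin g ∧ NonnegOn V g ∧ F = {v ∈ V | eval v g = 0}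

/-- `F` is a facet of `V`: an inclusion-maximal proper face. -/
def IsFacetOf {ι : Type} (V F : Set (ι → ℝ)) : Prop :=
  IsFaceOf V F ∧ F ≠ V ∧ ∀ F', IsFaceOf V F' → F' ≠ V → F ⊆ F' → F' = F

/-- `ℓ` is a facet-defining affine-linear function for `V`. -/
def IsFacetDefining {ι : Type} (V : Set (ι → ℝ)) (ℓ : MvPolynomial ι ℝ) : Prop :=
  IsAffLin ℓ ∧ NonnegOn V ℓ ∧ IsFacetOf V {v ∈ V | eval v ℓ = 0}

/-- The levelness of a point configuration `V`. -/
def levelness {ι : Type} (V : Set (ι → ℝ)) : ℕ :=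
  sInf {k | ∀ ℓ, IsFacetDefining V ℓ → ((fun v => eval v ℓ) '' V).ncard ≤ k}

/-- The base configuration of a matroid: the 0/1 indicator vectors of its bases. -/
def baseConfig {α : Type} (M : Matroid α) : Set (α → ℝ) :=
  {x | ∃ B, M.IsBase B ∧ x = Set.indicator B 1}

/-- `S` is the series connection of `M₁` and `M₂` (with respect to the common base point
`p` of their ground sets): its ground set is `E₁ ∪ E₂` and its bases are the disjoint
unions of a base of `M₁` and a base of `M₂`. -/
def IsSeriesConnection {γ : Type} (M₁ M₂ S : Matroid γ) : Prop :=
  S.E = M₁.E ∪ M₂.E ∧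
    ∀ B, S.IsBase B ↔ ∃ B₁ B₂, M₁.IsBase B₁ ∧ M₂.IsBase B₂ ∧ B₁ ∩ B₂ = ∅ ∧ B = B₁ ∪ B₂

section Aux

variable {γ : Type}

lemma hull_linear_eq' {V : Set (γ → ℝ)} {f : (γ → ℝ) → ℝ} (hf : IsLinearMap ℝ f) {c : ℝ}
    (h : ∀ x ∈ V, f x = c) : ∀ q ∈ convexHull ℝ V, f q = c :=
  fun _ hq => convexHull_min h (convex_hyperplane hf c) hq

lemma split_lemma' (V : Set (γ → ℝ)) (p : γ)
    (hV : ∀ x ∈ V, x p = 0 ∨ x p = 1) {q : γ → ℝ} (hq : q ∈ convexHull ℝ V) :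
    0 ≤ q p ∧ q p ≤ 1 ∧ ∃ r s : γ → ℝ, q = q p • r + (1 - q p) • s ∧
      (q p ≠ 0 → r ∈ convexHull ℝ {x ∈ V | x p = 1}) ∧
      (q p ≠ 1 → s ∈ convexHull ℝ {x ∈ V | x p = 0}) := by
  classical
  rw [convexHull_eq] at hq
  obtain ⟨ι, t, w, z, hw0, hw1, hz, hcm⟩ := hq
  rw [Finset.centerMass_eq_of_sum_1 _ _ hw1] at hcm
  set A := t.filter (fun i => z i p = 1) with hA
  set A' := t.filter (fun i => ¬ z i p = 1) with hA'
  have hzero : ∀ i ∈ A', z i p = 0 := by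
    intro i hi
    rcases Finset.mem_filter.1 hi with ⟨hit, hne⟩
    rcases hV (z i) (hz i hit) with h0 | h1
    · exact h0
    · exact absurd h1 hne
  set c := ∑ i ∈ A, w i with hc
  set c' := ∑ i ∈ A', w i with hc'
  have hcc' : c + c' = 1 := by
    rw [hc, hc', Finset.sum_filter_add_sum_filter_not]; exact hw1
  have hc0 : 0 ≤ c := Finset.sum_nonneg fun i hi => hw0 i (Finset.mem_filter.1 hi).1
  have hc'0 : 0 ≤ c' := Finset.sum_nonneg fun i hi => hw0 i (Finset.mem_filter.1 hi).1
  have hqp : q p = c := by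
    have hqq : q p = ∑ i ∈ t, w i * z i p := by
      rw [← hcm]; simp
    rw [hqq, ← Finset.sum_filter_add_sum_filter_not t (fun i => z i p = 1)]
    have h1 : ∑ i ∈ A, w i * z i p = c := by
      apply Finset.sum_congr rfl
      intro i hi; rw [(Finset.mem_filter.1 hi).2, mul_one]
    have h2 : ∑ i ∈ A', w i * z i p = 0 := by
      apply Finset.sum_eq_zero
      intro i hi; rw [hzero i hi, mul_zero]
    rw [h1, h2, add_zero]
  refine ⟨hqp ▸ hc0, hqp ▸ (by linarith), ?_⟩
  set r : γ → ℝ := if c = 0 then 0 else A.centerMass w z with hr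
  set s : γ → ℝ := if c' = 0 then 0 else A'.centerMass w z with hs
  have hra : c • r = ∑ i ∈ A, w i • z i := by
    by_cases h : c = 0
    · rw [h, zero_smul]
      symm; apply Finset.sum_eq_zero
      intro i hi
      have hwz : w i = 0 :=
        (Finset.sum_eq_zero_iff_of_nonneg
          (fun j hj => hw0 j (Finset.mem_filter.1 hj).1)).1 h i hi
      rw [hwz, zero_smul]
    · rw [hr, if_neg h, Finset.centerMass, smul_smul, mul_inv_cancel₀ h, one_smul]
  have hsa : c' • s = ∑ i ∈ A', w i • z i := by
    by_cases h : c' = 0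
    · rw [h, zero_smul]
      symm; apply Finset.sum_eq_zero
      intro i hi
      have hwz : w i = 0 :=
        (Finset.sum_eq_zero_iff_of_nonneg
          (fun j hj => hw0 j (Finset.mem_filter.1 hj).1)).1 h i hi
      rw [hwz, zero_smul]
    · rw [hs, if_neg h, Finset.centerMass, smul_smul, mul_inv_cancel₀ h, one_smul]
  refine ⟨r, s, ?_, ?_, ?_⟩
  · rw [hqp]
    have h1c : (1 : ℝ) - c = c' := by linarith
    rw [h1c, hra, hsa, ← hcm,
      ← Finset.sum_filter_add_sum_filter_not t (fun i => z i p = 1)]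
  · intro hne
    rw [hqp] at hne
    rw [hr, if_neg hne]
    apply Finset.centerMass_mem_convexHull
    · intro i hi; exact hw0 i (Finset.mem_filter.1 hi).1
    · exact lt_of_le_of_ne hc0 (Ne.symm hne)
    · intro i hi
      exact ⟨hz i (Finset.mem_filter.1 hi).1, (Finset.mem_filter.1 hi).2⟩
  · intro hne
    have hc'ne : c' ≠ 0 := by rw [hqp] at hne; intro h0; apply hne; linarith
    rw [hs, if_neg hc'ne]
    apply Finset.centerMass_mem_convexHull
    · intro i hi; exact hw0 i (Finset.mem_filter.1 hi).1
    · exact lt_of_le_of_ne hc'0 (Ne.symm hc'ne)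
    · intro i hi
      exact ⟨hz i (Finset.mem_filter.1 hi).1, hzero i hi⟩

lemma comb3 {K : Set (γ → ℝ)} (hK : Convex ℝ K) (hne : K.Nonempty)
    {c₁ c₂ c₃ : ℝ} (h₁ : 0 ≤ c₁) (h₂ : 0 ≤ c₂) (h₃ : 0 ≤ c₃) (hsum : c₁ + c₂ + c₃ = 1)
    {w₁ w₂ w₃ : γ → ℝ} (hw₁ : c₁ ≠ 0 → w₁ ∈ K) (hw₂ : c₂ ≠ 0 → w₂ ∈ K)
    (hw₃ : c₃ ≠ 0 → w₃ ∈ K) : c₁ • w₁ + c₂ • w₂ + c₃ • w₃ ∈ K := by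
  classical
  obtain ⟨d, hd⟩ := hne
  set w₁' := if c₁ = 0 then d else w₁ with hw₁'
  set w₂' := if c₂ = 0 then d else w₂ with hw₂'
  set w₃' := if c₃ = 0 then d else w₃ with hw₃'
  have e₁ : c₁ • w₁ = c₁ • w₁' := by
    by_cases h : c₁ = 0
    · rw [h, zero_smul, zero_smul]
    · rw [hw₁', if_neg h]
  have e₂ : c₂ • w₂ = c₂ • w₂' := by
    by_cases h : c₂ = 0
    · rw [h, zero_smul, zero_smul]
    · rw [hw₂', if_neg h]
  have e₃ : c₃ • w₃ = c₃ • w₃' := by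
    by_cases h : c₃ = 0
    · rw [h, zero_smul, zero_smul]
    · rw [hw₃', if_neg h]
  rw [e₁, e₂, e₃]
  have m₁ : w₁' ∈ K := by
    by_cases h : c₁ = 0
    · rw [hw₁', if_pos h]; exact hd
    · rw [hw₁', if_neg h]; exact hw₁ h
  have m₂ : w₂' ∈ K := by
    by_cases h : c₂ = 0
    · rw [hw₂', if_pos h]; exact hd
    · rw [hw₂', if_neg h]; exact hw₂ h
  have m₃ : w₃' ∈ K := by
    by_cases h : c₃ = 0
    · rw [hw₃', if_pos h]; exact hd
    · rw [hw₃', if_neg h]; exact hw₃ h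
  have := hK.sum_mem (t := (Finset.univ : Finset (Fin 3))) (w := ![c₁, c₂, c₃])
    (z := ![w₁', w₂', w₃'])
    (by intro i _; fin_cases i <;> assumption)
    (by simp [Fin.sum_univ_three, hsum])
    (by intro i _; fin_cases i <;> assumption)
  simpa [Fin.sum_univ_three, add_assoc] using this

lemma hull_add_mem {A B C : Set (γ → ℝ)} (h : A + B ⊆ C) {u v : γ → ℝ}
    (hu : u ∈ convexHull ℝ A) (hv : v ∈ convexHull ℝ B) : u + v ∈ convexHull ℝ C :=
  convexHull_mono h (by rw [convexHull_add]; exact Set.add_mem_add hu hv)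

lemma baseConfig_p (M : Matroid γ) (p : γ) : ∀ x ∈ baseConfig M, x p = 0 ∨ x p = 1 := by
  rintro x ⟨B, hB, rfl⟩
  classical
  by_cases h : p ∈ B
  · right; simp [Set.indicator_apply, h]
  · left; simp [Set.indicator_apply, h]

lemma hull_zero_off (M : Matroid γ) {q : γ → ℝ} (hq : q ∈ convexHull ℝ (baseConfig M))
    {e : γ} (he : e ∉ M.E) : q e = 0 := by
  refine hull_linear_eq' (f := fun x => x e) ⟨fun a b => rfl, fun c x => rfl⟩ ?_ q hq
  rintro x ⟨B, hB, rfl⟩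
  exact Set.indicator_of_notMem (fun hcon => he (hB.subset_ground hcon)) _

variable [Fintype γ]

lemma indicator_sum_eq (B : Set γ) : ∑ e, Set.indicator B (1 : γ → ℝ) e = (B.ncard : ℝ) := by
  classical
  have h1 : ∑ e, Set.indicator B (1 : γ → ℝ) e = ∑ e, if e ∈ B then (1 : ℝ) else 0 := by
    apply Finset.sum_congr rfl; intro e _; simp [Set.indicator_apply]
  rw [h1, Finset.sum_boole]
  congr 1
  rw [Set.ncard_eq_toFinset_card']
  congr 1
  ext e; simp

lemma hull_sum_eq (M : Matroid γ) {q q' : γ → ℝ} (hq : q ∈ convexHull ℝ (baseConfig M))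
    (hq' : q' ∈ convexHull ℝ (baseConfig M)) : ∑ e, q e = ∑ e, q' e := by
  obtain ⟨B₀, hB₀⟩ := M.exists_isBase
  have lin : IsLinearMap ℝ (fun x : γ → ℝ => ∑ e, x e) :=
    ⟨fun a b => by simp [Finset.sum_add_distrib], fun c x => by simp [Finset.mul_sum]⟩
  have hconst : ∀ x ∈ baseConfig M, ∑ e, x e = (B₀.ncard : ℝ) := by
    rintro x ⟨B, hB, rfl⟩
    rw [indicator_sum_eq, hB.ncard_eq_ncard_of_isBase hB₀]
  rw [hull_linear_eq' lin hconst q hq, hull_linear_eq' lin hconst q' hq']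

end Aux

theorem basePolytope_series_connection {γ : Type} [Fintype γ]
    (M₁ M₂ S : Matroid γ) (p : γ) (hE : M₁.E ∩ M₂.E = {p})
    (hp : ¬ ((∀ B, M₁.IsBase B → p ∈ B) ∧ ∀ B, M₂.IsBase B → p ∈ B))
    (hS : IsSeriesConnection M₁ M₂ S) :
    Set.InjOn (fun q : (γ → ℝ) × (γ → ℝ) => q.1 + q.2)
        ((convexHull ℝ (baseConfig M₁) ×ˢ convexHull ℝ (baseConfig M₂)) ∩
          {q | q.1 p + q.2 p ≤ 1}) ∧
      (fun q : (γ → ℝ) × (γ → ℝ) => q.1 + q.2) ''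
          ((convexHull ℝ (baseConfig M₁) ×ˢ convexHull ℝ (baseConfig M₂)) ∩
            {q | q.1 p + q.2 p ≤ 1}) =
        convexHull ℝ (baseConfig S) := by
  classical
  constructor
  · -- Injectivity
    rintro ⟨x₁, x₂⟩ ⟨⟨h₁, h₂⟩, _⟩ ⟨y₁, y₂⟩ ⟨⟨h₁', h₂'⟩, _⟩ hsum
    dsimp only at h₁ h₂ h₁' h₂'
    have hsum' : x₁ + x₂ = y₁ + y₂ := hsum
    have key : ∀ e, e ≠ p → x₁ e = y₁ e := by
      intro e he
      have hadd := congrFun hsum' e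
      simp only [Pi.add_apply] at hadd
      by_cases h1e : e ∈ M₁.E
      · have h2e : e ∉ M₂.E := by
          intro h
          exact he (by
            have hmem : e ∈ M₁.E ∩ M₂.E := ⟨h1e, h⟩
            rwa [hE, Set.mem_singleton_iff] at hmem)
        have z1 := hull_zero_off M₂ h₂ h2e
        have z2 := hull_zero_off M₂ h₂' h2e
        linarith
      · rw [hull_zero_off M₁ h₁ h1e, hull_zero_off M₁ h₁' h1e]
    have hx₁y₁ : x₁ = y₁ := by
      funext e
      by_cases he : e = p
      · subst he
        have hS₁ := hull_sum_eq M₁ h₁ h₁'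
        have e1 : ∑ e ∈ Finset.univ.erase e, x₁ e = ∑ e' ∈ Finset.univ.erase e, y₁ e' :=
          Finset.sum_congr rfl fun e' he' => key e' (Finset.ne_of_mem_erase he')
        have e2 := Finset.add_sum_erase Finset.univ x₁ (Finset.mem_univ e)
        have e3 := Finset.add_sum_erase Finset.univ y₁ (Finset.mem_univ e)
        linarith
      · exact key e he
    refine Prod.ext hx₁y₁ ?_
    rw [hx₁y₁] at hsum'
    exact add_left_cancel hsum'
  · -- Image equality
    apply Set.Subset.antisymm
    · rintro x ⟨⟨x₁, x₂⟩, ⟨⟨h₁, h₂⟩, hle⟩, rfl⟩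
      dsimp only at h₁ h₂ hle
      obtain ⟨ha0, ha1, r₁, s₁, hx₁, hr₁, hs₁⟩ := split_lemma' _ p (baseConfig_p M₁ p) h₁
      obtain ⟨hb0, hb1, r₂, s₂, hx₂, hr₂, hs₂⟩ := split_lemma' _ p (baseConfig_p M₂ p) h₂
      set a := x₁ p with hadef
      set b := x₂ p with hbdef
      have hab : a + b ≤ 1 := hle
      have hadd : ∀ u v : γ → ℝ, u ∈ baseConfig M₁ → v ∈ baseConfig M₂ →
          (u p = 0 ∨ v p = 0) → u + v ∈ baseConfig S := by
        rintro _ _ ⟨B₁, hB₁, rfl⟩ ⟨B₂, hB₂, rfl⟩ hor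
        have hdisj : Disjoint B₁ B₂ := by
          rw [Set.disjoint_iff_inter_eq_empty]
          ext e
          simp only [Set.mem_inter_iff, Set.mem_empty_iff_false, iff_false, not_and]
          intro he₁ he₂
          have hep : e = p := by
            have hmem : e ∈ M₁.E ∩ M₂.E := ⟨hB₁.subset_ground he₁, hB₂.subset_ground he₂⟩
            rwa [hE, Set.mem_singleton_iff] at hmem
          subst hep
          rcases hor with h | h
          · simp [Set.indicator_apply, he₁] at h
          · simp [Set.indicator_apply, he₂] at h
        refine ⟨B₁ ∪ B₂, (hS.2 _).2
          ⟨B₁, B₂, hB₁, hB₂, Set.disjoint_iff_inter_eq_empty.1 hdisj, rfl⟩, ?_⟩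
        rw [Set.indicator_union_of_disjoint hdisj]; rfl
      have mem10 : ∀ u v : γ → ℝ, u ∈ convexHull ℝ {x ∈ baseConfig M₁ | x p = 1} →
          v ∈ convexHull ℝ {x ∈ baseConfig M₂ | x p = 0} →
          u + v ∈ convexHull ℝ (baseConfig S) := by
        intro u v hu hv
        refine hull_add_mem ?_ hu hv
        rintro _ ⟨a', ha', b', hb', rfl⟩
        exact hadd _ _ ha'.1 hb'.1 (Or.inr hb'.2)
      have mem01 : ∀ u v : γ → ℝ, u ∈ convexHull ℝ {x ∈ baseConfig M₁ | x p = 0} →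
          v ∈ convexHull ℝ {x ∈ baseConfig M₂ | x p = 1} →
          u + v ∈ convexHull ℝ (baseConfig S) := by
        intro u v hu hv
        refine hull_add_mem ?_ hu hv
        rintro _ ⟨a', ha', b', hb', rfl⟩
        exact hadd _ _ ha'.1 hb'.1 (Or.inl ha'.2)
      have mem00 : ∀ u v : γ → ℝ, u ∈ convexHull ℝ {x ∈ baseConfig M₁ | x p = 0} →
          v ∈ convexHull ℝ {x ∈ baseConfig M₂ | x p = 0} →
          u + v ∈ convexHull ℝ (baseConfig S) := by
        intro u v hu hv
        refine hull_add_mem ?_ hu hv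
        rintro _ ⟨a', ha', b', hb', rfl⟩
        exact hadd _ _ ha'.1 hb'.1 (Or.inl ha'.2)
      have hcomb : x₁ + x₂ = a • (r₁ + s₂) + b • (s₁ + r₂) + (1 - a - b) • (s₁ + s₂) := by
        rw [hx₁, hx₂]
        funext e
        simp only [Pi.add_apply, Pi.smul_apply, smul_eq_mul]
        ring
      show x₁ + x₂ ∈ convexHull ℝ (baseConfig S)
      rw [hcomb]
      obtain ⟨B₀, hB₀⟩ := S.exists_isBase
      have hne : (convexHull ℝ (baseConfig S)).Nonempty :=
        ⟨_, subset_convexHull ℝ _ ⟨B₀, hB₀, rfl⟩⟩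
      refine comb3 (convex_convexHull ℝ _) hne ha0 hb0 (by linarith) (by ring) ?_ ?_ ?_
      · intro hane
        have hb1' : b ≠ 1 := by
          intro h
          have : 0 < a := lt_of_le_of_ne ha0 (Ne.symm hane)
          rw [h] at hab; linarith
        exact mem10 _ _ (hr₁ hane) (hs₂ hb1')
      · intro hbne
        have ha1' : a ≠ 1 := by
          intro h
          have : 0 < b := lt_of_le_of_ne hb0 (Ne.symm hbne)
          rw [h] at hab; linarith
        exact mem01 _ _ (hs₁ ha1') (hr₂ hbne)
      · intro hcne
        have hlt : a + b < 1 := lt_of_le_of_ne hab (by intro h; apply hcne; linarith)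
        have ha1' : a ≠ 1 := by intro h; rw [h] at hlt; linarith
        have hb1' : b ≠ 1 := by intro h; rw [h] at hlt; linarith
        exact mem00 _ _ (hs₁ ha1') (hs₂ hb1')
    · apply convexHull_min
      · rintro _ ⟨B, hB, rfl⟩
        obtain ⟨B₁, B₂, hB₁, hB₂, hint, rfl⟩ := (hS.2 B).1 hB
        have hdisj : Disjoint B₁ B₂ := Set.disjoint_iff_inter_eq_empty.2 hint
        refine ⟨(Set.indicator B₁ 1, Set.indicator B₂ 1),
          ⟨⟨subset_convexHull ℝ _ ⟨B₁, hB₁, rfl⟩, subset_convexHull ℝ _ ⟨B₂, hB₂, rfl⟩⟩, ?_⟩, ?_⟩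
        · show Set.indicator B₁ (1 : γ → ℝ) p + Set.indicator B₂ (1 : γ → ℝ) p ≤ 1
          by_cases h1 : p ∈ B₁ <;> by_cases h2 : p ∈ B₂
          · exact absurd (Set.eq_empty_iff_forall_notMem.1 hint p ⟨h1, h2⟩) (fun h => h)
          · simp [Set.indicator_apply, h1, h2]
          · simp [Set.indicator_apply, h1, h2]
          · simp [Set.indicator_apply, h1, h2]
        · show Set.indicator B₁ (1 : γ → ℝ) + Set.indicator B₂ (1 : γ → ℝ) =
              Set.indicator (B₁ ∪ B₂) (1 : γ → ℝ)
          rw [Set.indicator_union_of_disjoint hdisj]; rfl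
      · have lin1 : IsLinearMap ℝ (fun q : (γ → ℝ) × (γ → ℝ) => q.1 p + q.2 p) := by
          constructor
          · intro u v; simp only [Prod.fst_add, Prod.snd_add, Pi.add_apply]; ring
          · intro c u; simp only [Prod.smul_fst, Prod.smul_snd, Pi.smul_apply,
              smul_eq_mul]; ring
        have lin2 : IsLinearMap ℝ (fun q : (γ → ℝ) × (γ → ℝ) => q.1 + q.2) := by
          constructor
          · intro u v
            simp only [Prod.fst_add, Prod.snd_add]
            abel
          · intro c u
            simp only [Prod.smul_fst, Prod.smul_snd, smul_add]
        exact (((convex_convexHull ℝ _).prod (convex_convexHull ℝ _)).inter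
          (convex_halfSpace_le lin1 1)).is_linear_image lin2
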